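/- Let λ = (λₙ) and ρ = (ρₙ) be sequences of positive reals. The space of operator sequences A = (Aₙ) in B(H) such that both Σₙ λₙ Aₙ*Aₙ and Σₙ ρₙ AₙAₙ* converge strongly to bounded operators, equipped with the norm ‖A‖ := max( ‖Σₙ λₙ Aₙ*Aₙ‖^{1/2}, ‖Σₙ ρₙ AₙAₙ*‖^{1/2} ), is a complete normed space (every absolutely convergent series converges). -/

import Mathlib

open ContinuousLinearMap Filter Topology
open scoped ENNReal NNReal

/-- The norm `max(‖∑ₙ λₙ Aₙ*Aₙ‖^{1/2}, ‖∑ₙ ρₙ AₙAₙ*‖^{1/2})` of an operator sequence in the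
double asymmetrically weighted module, expressed in `ℝ≥0∞` through the quadratic forms
`sup_{‖h‖≤1} ∑ₙ λₙ‖Aₙh‖²` and `sup_{‖h‖≤1} ∑ₙ ρₙ‖Aₙ*h‖²` (which are finite exactly when the
corresponding series converge strongly to bounded operators). -/
noncomputable def dawNorm {H : Type*} [NormedAddCommGroup H] [InnerProductSpace ℂ H]
    [CompleteSpace H] (l r : ℕ → ℝ) (A : ℕ → H →L[ℂ] H) : ℝ≥0∞ :=
  max
    ((⨆ h : {h : H // ‖h‖ ≤ 1}, ∑' n,
        ENNReal.ofReal (l n) * (‖A n (h : H)‖₊ : ℝ≥0∞) ^ 2) ^ ((1 : ℝ) / 2))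
    ((⨆ h : {h : H // ‖h‖ ≤ 1}, ∑' n,
        ENNReal.ofReal (r n) * (‖adjoint (A n) (h : H)‖₊ : ℝ≥0∞) ^ 2) ^ ((1 : ℝ) / 2))

private lemma daw_sqrt_le {x y : ℝ≥0∞} : x ^ ((1:ℝ)/2) ≤ y ↔ x ≤ y ^ (2:ℝ) := by
  rw [← ENNReal.rpow_le_rpow_iff (show (0:ℝ) < 2 by norm_num), ← ENNReal.rpow_mul]
  norm_num

private lemma daw_two (f g : ℕ → ℝ≥0∞) :
    (∑' n, (f n + g n) ^ (2:ℝ)) ^ ((1:ℝ)/2) ≤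
      (∑' n, f n ^ (2:ℝ)) ^ ((1:ℝ)/2) + (∑' n, g n ^ (2:ℝ)) ^ ((1:ℝ)/2) := by
  rw [daw_sqrt_le, ENNReal.tsum_eq_iSup_sum]
  refine iSup_le fun s => daw_sqrt_le.1 ?_
  refine (ENNReal.Lp_add_le s f g (by norm_num : (1:ℝ) ≤ 2)).trans ?_
  exact add_le_add (ENNReal.rpow_le_rpow (ENNReal.sum_le_tsum s) (by norm_num))
    (ENNReal.rpow_le_rpow (ENNReal.sum_le_tsum s) (by norm_num))

private lemma daw_fin (b : ℕ → ℕ → ℝ≥0∞) (M : ℕ) :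
    (∑' n, (∑ m ∈ Finset.range M, b m n) ^ (2:ℝ)) ^ ((1:ℝ)/2) ≤
      ∑ m ∈ Finset.range M, (∑' n, b m n ^ (2:ℝ)) ^ ((1:ℝ)/2) := by
  induction M with
  | zero =>
      have h0 : ((0:ℝ≥0∞)) ^ (2:ℝ) = 0 := ENNReal.zero_rpow_of_pos (by norm_num)
      have h1 : ((0:ℝ≥0∞)) ^ ((1:ℝ)/2) = 0 := ENNReal.zero_rpow_of_pos (by norm_num)
      simp [h0, h1]
  | succ M ih =>
      simp only [Finset.sum_range_succ]
      exact (daw_two _ _).trans (add_le_add_left ih _)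

private lemma daw_mink (b : ℕ → ℕ → ℝ≥0∞) :
    (∑' n, (∑' m, b m n) ^ (2:ℝ)) ^ ((1:ℝ)/2) ≤
      ∑' m, (∑' n, b m n ^ (2:ℝ)) ^ ((1:ℝ)/2) := by
  rw [daw_sqrt_le, ENNReal.tsum_eq_iSup_sum]
  refine iSup_le fun s => ?_
  have hmono : ∀ n, Monotone fun M => ∑ m ∈ Finset.range M, b m n := fun n M M' h =>
    Finset.sum_le_sum_of_subset (Finset.range_subset_range.2 h)
  have hsq : ∀ n, (∑' m, b m n) ^ (2:ℝ) =
      ⨆ M, (∑ m ∈ Finset.range M, b m n) ^ (2:ℝ) := by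
    intro n
    rw [ENNReal.tsum_eq_iSup_nat]
    exact Monotone.map_iSup_of_continuousAt (ENNReal.continuous_rpow_const.continuousAt)
      (fun x y h => ENNReal.rpow_le_rpow h (by norm_num))
      (by simpa using ENNReal.zero_rpow_of_pos (show (0:ℝ) < 2 by norm_num))
  calc ∑ n ∈ s, (∑' m, b m n) ^ (2:ℝ)
      = ∑ n ∈ s, ⨆ M, (∑ m ∈ Finset.range M, b m n) ^ (2:ℝ) := by
        exact Finset.sum_congr rfl fun n _ => hsq n
    _ = ⨆ M, ∑ n ∈ s, (∑ m ∈ Finset.range M, b m n) ^ (2:ℝ) :=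
        ENNReal.finsetSum_iSup_of_monotone
          (fun n M M' h => ENNReal.rpow_le_rpow (hmono n h) (by norm_num))
    _ ≤ (∑' m, (∑' n, b m n ^ (2:ℝ)) ^ ((1:ℝ)/2)) ^ (2:ℝ) := by
        refine iSup_le fun M => ?_
        refine (ENNReal.sum_le_tsum s).trans (daw_sqrt_le.1 ((daw_fin b M).trans ?_))
        exact (ENNReal.sum_le_tsum (Finset.range M))

private lemma enorm_le_tsum_of_hasSum {E : Type*} [NormedAddCommGroup E] {f : ℕ → E} {a : E}
    (h : HasSum f a) : (‖a‖₊ : ℝ≥0∞) ≤ ∑' m, (‖f m‖₊ : ℝ≥0∞) := by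
  by_cases hs : Summable fun m => ‖f m‖₊
  · rw [← ENNReal.coe_tsum hs, ENNReal.coe_le_coe, ← h.tsum_eq]
    exact nnnorm_tsum_le hs
  · have htop : (∑' m, (‖f m‖₊ : ℝ≥0∞)) = ⊤ := by
      by_contra hne
      exact hs (ENNReal.tsum_coe_ne_top_iff_summable.1 hne)
    simp [htop]

private lemma daw_key {H : Type*} [NormedAddCommGroup H] [InnerProductSpace ℂ H]
    [CompleteSpace H] (w : ℕ → ℝ≥0∞) (C : ℕ → ℕ → H →L[ℂ] H) (D : ℕ → H →L[ℂ] H)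
    (hD : ∀ n (h : H), (‖D n h‖₊ : ℝ≥0∞) ≤ ∑' m, (‖C m n h‖₊ : ℝ≥0∞)) :
    (⨆ h : {h : H // ‖h‖ ≤ 1}, ∑' n, w n * (‖D n (h : H)‖₊ : ℝ≥0∞) ^ 2) ^ ((1:ℝ)/2) ≤
      ∑' m, (⨆ h : {h : H // ‖h‖ ≤ 1},
        ∑' n, w n * (‖C m n (h : H)‖₊ : ℝ≥0∞) ^ 2) ^ ((1:ℝ)/2) := by
  rw [daw_sqrt_le]
  refine iSup_le fun h => ?_
  set b : ℕ → ℕ → ℝ≥0∞ := fun m n => w n ^ ((1:ℝ)/2) * (‖C m n (h:H)‖₊ : ℝ≥0∞) with hb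
  have hbs : ∀ m, ∑' n, b m n ^ (2:ℝ) = ∑' n, w n * (‖C m n (h:H)‖₊ : ℝ≥0∞) ^ 2 := by
    intro m
    refine tsum_congr fun n => ?_
    rw [hb]
    rw [ENNReal.mul_rpow_of_nonneg _ _ (by norm_num : (0:ℝ) ≤ 2), ← ENNReal.rpow_mul,
      ENNReal.rpow_two]
    norm_num [ENNReal.rpow_one]
  have h1 : ∀ n, w n * (‖D n (h:H)‖₊ : ℝ≥0∞) ^ 2 ≤ (∑' m, b m n) ^ (2:ℝ) := by
    intro n
    have hb' : (∑' m, b m n) ^ (2:ℝ)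
        = w n * (∑' m, (‖C m n (h:H)‖₊ : ℝ≥0∞)) ^ 2 := by
      rw [show (∑' m, b m n) = w n ^ ((1:ℝ)/2) * ∑' m, (‖C m n (h:H)‖₊ : ℝ≥0∞) from
        ENNReal.tsum_mul_left, ENNReal.mul_rpow_of_nonneg _ _ (by norm_num : (0:ℝ) ≤ 2),
        ← ENNReal.rpow_mul, ENNReal.rpow_two]
      norm_num [ENNReal.rpow_one]
    rw [hb']
    exact mul_le_mul_right (pow_le_pow_left' (hD n h) 2) _
  calc ∑' n, w n * (‖D n (h:H)‖₊ : ℝ≥0∞) ^ 2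
      ≤ ∑' n, (∑' m, b m n) ^ (2:ℝ) := ENNReal.tsum_le_tsum h1
    _ ≤ (∑' m, (∑' n, b m n ^ (2:ℝ)) ^ ((1:ℝ)/2)) ^ (2:ℝ) := daw_sqrt_le.1 (daw_mink b)
    _ ≤ (∑' m, (⨆ h' : {h : H // ‖h‖ ≤ 1},
          ∑' n, w n * (‖C m n (h' : H)‖₊ : ℝ≥0∞) ^ 2) ^ ((1:ℝ)/2)) ^ (2:ℝ) := by
        refine ENNReal.rpow_le_rpow (ENNReal.tsum_le_tsum fun m =>
          ENNReal.rpow_le_rpow ?_ (by norm_num)) (by norm_num)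
        rw [hbs m]
        exact le_iSup (fun h' : {h : H // ‖h‖ ≤ 1} =>
          ∑' n, w n * (‖C m n (h' : H)‖₊ : ℝ≥0∞) ^ 2) h

private lemma daw_dom {H : Type*} [NormedAddCommGroup H] [InnerProductSpace ℂ H]
    [CompleteSpace H] (l r : ℕ → ℝ) (C : ℕ → ℕ → H →L[ℂ] H) (D : ℕ → H →L[ℂ] H)
    (hD : ∀ n, HasSum (fun m => C m n) (D n)) :
    dawNorm l r D ≤ ∑' m, dawNorm l r (C m) := by
  have hpt : ∀ n (h : H), (‖D n h‖₊ : ℝ≥0∞) ≤ ∑' m, (‖C m n h‖₊ : ℝ≥0∞) := fun n h =>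
    enorm_le_tsum_of_hasSum ((hD n).mapL (ContinuousLinearMap.apply ℂ H h))
  have hpt' : ∀ n (h : H),
      (‖adjoint (D n) h‖₊ : ℝ≥0∞) ≤ ∑' m, (‖adjoint (C m n) h‖₊ : ℝ≥0∞) := by
    intro n h
    have hadj : HasSum (fun m => adjoint (C m n)) (adjoint (D n)) :=
      (hD n).map (ContinuousLinearMap.adjoint :
        (H →L[ℂ] H) ≃ₗᵢ⋆[ℂ] (H →L[ℂ] H)) (LinearIsometryEquiv.continuous _)
    exact enorm_le_tsum_of_hasSum (hadj.mapL (ContinuousLinearMap.apply ℂ H h))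
  simp only [dawNorm]
  refine max_le ?_ ?_
  · exact (daw_key _ C D hpt).trans (ENNReal.tsum_le_tsum fun m => le_max_left _ _)
  · exact (daw_key _ (fun m n => adjoint (C m n)) (fun n => adjoint (D n)) hpt').trans
      (ENNReal.tsum_le_tsum fun m => le_max_right _ _)

/-- The double asymmetrically weighted module
`{(Aₙ) : ∑ₙ λₙAₙ*Aₙ and ∑ₙ ρₙAₙAₙ* converge strongly}` with norm
`max(‖∑ₙ λₙAₙ*Aₙ‖^{1/2}, ‖∑ₙ ρₙAₙAₙ*‖^{1/2})` is complete: every absolutely convergent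
series `∑ₘ A⁽ᵐ⁾` of members converges in the space to a member `B`. -/
theorem daw_module_complete {H : Type*} [NormedAddCommGroup H] [InnerProductSpace ℂ H]
    [CompleteSpace H] [TopologicalSpace.SeparableSpace H]
    (l r : ℕ → ℝ) (hl : ∀ n, 0 < l n) (hr : ∀ n, 0 < r n)
    (A : ℕ → ℕ → H →L[ℂ] H) (habs : ∑' m, dawNorm l r (A m) ≠ ⊤) :
    ∃ B : ℕ → H →L[ℂ] H, dawNorm l r B ≠ ⊤ ∧
      (∀ n, HasSum (fun m => A m n) (B n)) ∧
      Tendsto (fun M => dawNorm l r (fun n => B n - ∑ m ∈ Finset.range M, A m n))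
        atTop (𝓝 0) := by
  have hNne : ∀ m, dawNorm l r (A m) ≠ ⊤ := ENNReal.ne_top_of_tsum_ne_top habs
  have htR : Summable fun m => (dawNorm l r (A m)).toReal := ENNReal.summable_toReal habs
  -- pointwise bound on unit vectors
  have hbound : ∀ m n (h : H), ‖h‖ ≤ 1 →
      ‖A m n h‖ ≤ (dawNorm l r (A m)).toReal / Real.sqrt (l n) := by
    intro m n h hh
    have hs : (⨆ h' : {h : H // ‖h‖ ≤ 1},
        ∑' n, ENNReal.ofReal (l n) * (‖A m n (h' : H)‖₊ : ℝ≥0∞) ^ 2)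
        ≤ dawNorm l r (A m) ^ (2:ℝ) :=
      daw_sqrt_le.1 (le_max_left _ _)
    have h1 : ENNReal.ofReal (l n) * (‖A m n h‖₊ : ℝ≥0∞) ^ 2
        ≤ dawNorm l r (A m) ^ (2:ℝ) := by
      refine le_trans (ENNReal.le_tsum (f := fun n => ENNReal.ofReal (l n) *
        (‖A m n h‖₊ : ℝ≥0∞) ^ 2) n) (le_trans ?_ hs)
      exact le_iSup (fun h' : {h : H // ‖h‖ ≤ 1} =>
        ∑' n, ENNReal.ofReal (l n) * (‖A m n (h' : H)‖₊ : ℝ≥0∞) ^ 2) ⟨h, hh⟩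
    have ht : dawNorm l r (A m) ^ (2:ℝ) ≠ ⊤ :=
      ENNReal.rpow_ne_top_of_nonneg (by norm_num) (hNne m)
    have h2 : l n * ‖A m n h‖ ^ 2 ≤ (dawNorm l r (A m)).toReal ^ 2 := by
      have h3 := ENNReal.toReal_mono ht h1
      rw [ENNReal.toReal_mul, ENNReal.toReal_ofReal (hl n).le, ENNReal.toReal_pow,
        ENNReal.coe_toReal, coe_nnnorm] at h3
      rwa [← ENNReal.toReal_rpow, Real.rpow_two] at h3
    have hA2 : ‖A m n h‖ ^ 2 ≤ (dawNorm l r (A m)).toReal ^ 2 / l n := by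
      rw [le_div_iff₀ (hl n)]
      linarith [h2]
    calc ‖A m n h‖ = Real.sqrt (‖A m n h‖ ^ 2) := (Real.sqrt_sq (norm_nonneg _)).symm
      _ ≤ Real.sqrt ((dawNorm l r (A m)).toReal ^ 2 / l n) := Real.sqrt_le_sqrt hA2
      _ = (dawNorm l r (A m)).toReal / Real.sqrt (l n) := by
          rw [Real.sqrt_div (sq_nonneg _), Real.sqrt_sq ENNReal.toReal_nonneg]
  -- operator norm bound
  have hop : ∀ m n, ‖A m n‖ ≤ (dawNorm l r (A m)).toReal / Real.sqrt (l n) := by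
    intro m n
    refine (A m n).opNorm_le_bound
      (div_nonneg ENNReal.toReal_nonneg (Real.sqrt_nonneg _)) fun x => ?_
    rcases eq_or_ne x 0 with rfl | hx
    · simp
    · have hx' : ‖x‖ ≠ 0 := norm_ne_zero_iff.2 hx
      have hu : ‖((‖x‖⁻¹ : ℝ) : ℂ) • x‖ ≤ 1 := by
        rw [norm_smul]
        simp only [Complex.norm_real, Real.norm_eq_abs, abs_inv, abs_norm]
        rw [inv_mul_cancel₀ hx']
      have hb := hbound m n (((‖x‖⁻¹ : ℝ) : ℂ) • x) hu
      rw [map_smul, norm_smul] at hb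
      simp only [Complex.norm_real, Real.norm_eq_abs, abs_inv, abs_norm] at hb
      calc ‖A m n x‖ = ‖x‖ * (‖x‖⁻¹ * ‖A m n x‖) := by field_simp
        _ ≤ ‖x‖ * ((dawNorm l r (A m)).toReal / Real.sqrt (l n)) :=
            mul_le_mul_of_nonneg_left hb (norm_nonneg x)
        _ = (dawNorm l r (A m)).toReal / Real.sqrt (l n) * ‖x‖ := mul_comm _ _
  have hsum : ∀ n, Summable fun m => A m n := by
    intro n
    refine Summable.of_norm (Summable.of_nonneg_of_le
      (fun m => norm_nonneg _) (fun m => hop m n) ?_)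
    exact htR.div_const _
  refine ⟨fun n => ∑' m, A m n, ?_, fun n => (hsum n).hasSum, ?_⟩
  · exact ((daw_dom l r A _ (fun n => (hsum n).hasSum)).trans_lt
      (lt_top_iff_ne_top.2 habs)).ne
  · have hle : ∀ M, dawNorm l r (fun n => (∑' m, A m n) - ∑ m ∈ Finset.range M, A m n)
        ≤ ∑' m, dawNorm l r (A (m + M)) := by
      intro M
      refine daw_dom l r (fun m n => A (m + M) n) _ fun n => ?_
      have hh : HasSum (fun m => A (m + M) n)
          ((∑' m, A m n) - ∑ m ∈ Finset.range M, A m n) := by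
        refine (hasSum_nat_add_iff (f := fun m => A m n) M).2 ?_
        simpa using (hsum n).hasSum
      exact hh
    have h0 : Tendsto (fun M => ∑' m, dawNorm l r (A (m + M))) atTop (𝓝 0) :=
      ENNReal.tendsto_sum_nat_add _ habs
    exact tendsto_of_tendsto_of_tendsto_of_le_of_le tendsto_const_nhds h0
      (fun M => zero_le) hle
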